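/- arXiv:1903.07841 — 2 statements merged into one kernel-verified Lean document; each statement's English description precedes it below -/
import Mathlib

section
/- Let n ≥ 4 be a composite integer. The zero divisor graph Γ(Z_n) is a complete graph if and only if n = p² for some prime p. -/
open scoped BigOperators

/-- Vertex set of the zero divisor graph of `ZMod n`: the nonzero zero divisors. -/
abbrev ZdVert (n : ℕ) : Type :=
  {x : ZMod n // x ≠ 0 ∧ ∃ y : ZMod n, y ≠ 0 ∧ x * y = 0}

/-- The zero divisor graph `Γ(ZMod n)`: vertices are the nonzero zero divisors, and two
distinct vertices are adjacent iff their product is zero. -/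
def zdGraph (n : ℕ) : SimpleGraph (ZdVert n) where
  Adj a b := a ≠ b ∧ (a : ZMod n) * (b : ZMod n) = 0
  symm := ⟨by
    rintro a b ⟨hne, h⟩
    exact ⟨hne.symm, by rwa [mul_comm]⟩⟩
  loopless := ⟨fun a h => h.1 rfl⟩

instance (n : ℕ) : DecidableRel (zdGraph n).Adj :=
  fun a b => inferInstanceAs (Decidable (a ≠ b ∧ (a : ZMod n) * (b : ZMod n) = 0))

instance (n : ℕ) (s : Set (ZdVert n)) [DecidablePred (· ∈ s)] :
    DecidableRel ((zdGraph n).induce s).Adj :=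
  fun a b => inferInstanceAs (Decidable ((zdGraph n).Adj a b))

/-- The set `A_d = {x ∈ ZMod n : gcd(x, n) = d}`, viewed inside the vertex set of the
zero divisor graph. -/
def fiberSet (n : ℕ) (d : ℕ) : Set (ZdVert n) :=
  {v | Nat.gcd (v : ZMod n).val n = d}

instance (n d : ℕ) : DecidablePred (· ∈ fiberSet n d) :=
  fun v => inferInstanceAs (Decidable (Nat.gcd (v : ZMod n).val n = d))

/-- If the zero divisor graph is complete, then any two distinct (mod `n`) nonzero
zero divisors multiply to a multiple of `n`. -/
lemma zd_key (n : ℕ) [NeZero n] (h : zdGraph n = ⊤) {a b w : ℕ}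
    (ha0 : 0 < a) (han : a < n) (hb0 : 0 < b) (hbn : b < n) (hab : a ≠ b)
    (hw0 : 0 < w) (hwn : w < n) (haw : n ∣ a * w) (hbw : n ∣ b * w) :
    n ∣ a * b := by
  have hwz : (w : ZMod n) ≠ 0 := by
    intro hd
    rw [ZMod.natCast_eq_zero_iff] at hd
    exact absurd (Nat.le_of_dvd hw0 hd) (not_le.mpr hwn)
  have haz : (a : ZMod n) ≠ 0 := by
    intro hd
    rw [ZMod.natCast_eq_zero_iff] at hd
    exact absurd (Nat.le_of_dvd ha0 hd) (not_le.mpr han)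
  have hbz : (b : ZMod n) ≠ 0 := by
    intro hd
    rw [ZMod.natCast_eq_zero_iff] at hd
    exact absurd (Nat.le_of_dvd hb0 hd) (not_le.mpr hbn)
  have hawz : (a : ZMod n) * (w : ZMod n) = 0 := by
    rw [← Nat.cast_mul, ZMod.natCast_eq_zero_iff]; exact haw
  have hbwz : (b : ZMod n) * (w : ZMod n) = 0 := by
    rw [← Nat.cast_mul, ZMod.natCast_eq_zero_iff]; exact hbw
  let va : ZdVert n := ⟨(a : ZMod n), haz, (w : ZMod n), hwz, hawz⟩
  let vb : ZdVert n := ⟨(b : ZMod n), hbz, (w : ZMod n), hwz, hbwz⟩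
  have hne : va ≠ vb := by
    intro he
    apply hab
    have h1 : (a : ZMod n) = (b : ZMod n) := congrArg Subtype.val he
    have h2 := congrArg ZMod.val h1
    rwa [ZMod.val_cast_of_lt han, ZMod.val_cast_of_lt hbn] at h2
  have hadj : (zdGraph n).Adj va vb := by rw [h]; exact hne
  have hz := hadj.2
  rwa [show ((va : ZMod n)) = (a : ZMod n) from rfl,
    show ((vb : ZMod n)) = (b : ZMod n) from rfl, ← Nat.cast_mul,
    ZMod.natCast_eq_zero_iff] at hz

/-- Every vertex of the zero divisor graph of `ZMod (p^2)` has value divisible by `p`. -/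
lemma zd_dvd_val {p : ℕ} (hp : p.Prime) [NeZero (p ^ 2)] (v : ZdVert (p ^ 2)) :
    p ∣ (v : ZMod (p ^ 2)).val := by
  obtain ⟨x, hx0, y, hy0, hxy⟩ := v
  by_contra hnd
  have hcop : Nat.Coprime (x.val) (p ^ 2) :=
    Nat.Coprime.pow_right 2 (Nat.coprime_comm.mp ((hp.coprime_iff_not_dvd).mpr hnd))
  have hu : IsUnit (x : ZMod (p ^ 2)) := by
    rw [← ZMod.natCast_zmod_val x]
    exact (ZMod.isUnit_iff_coprime _ _).mpr hcop
  exact hy0 ((hu.mul_right_eq_zero).mp hxy)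

/-- For composite `n ≥ 4`, the zero divisor graph `Γ(ZMod n)` is complete iff `n = p²`
for some prime `p`. -/
theorem zdGraph_complete_iff (n : ℕ) (hn : 4 ≤ n) (hcomp : ¬ n.Prime) :
    zdGraph n = ⊤ ↔ ∃ p : ℕ, p.Prime ∧ n = p ^ 2 := by
  haveI : NeZero n := ⟨by omega⟩
  constructor
  · intro h
    have hp' : n.minFac.Prime := Nat.minFac_prime (by omega)
    obtain ⟨m, hm⟩ := n.minFac_dvd
    have hm1 : m ≠ 1 := by
      rintro rfl
      rw [mul_one] at hm
      exact hcomp (hm ▸ hp')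
    have hm0 : m ≠ 0 := by rintro rfl; rw [mul_zero] at hm; omega
    have hm2 : 2 ≤ m := by omega
    have hpm : n.minFac ≤ m := by
      have h1 : m.minFac ∣ n := (m.minFac_dvd).trans ⟨n.minFac, by rw [mul_comm]; exact hm⟩
      exact le_trans (Nat.minFac_le_of_dvd (Nat.minFac_prime (by omega)).two_le h1)
        (Nat.minFac_le (by omega))
    obtain ⟨p, hpq⟩ : ∃ p, p = n.minFac := ⟨_, rfl⟩
    rw [← hpq] at hp' hm hpm
    have hp2 : 2 ≤ p := hp'.two_le
    by_cases hmp : m = p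
    · exact ⟨p, hp', by rw [hmp] at hm; rw [sq]; exact hm⟩
    exfalso
    have hpm' : p < m := lt_of_le_of_ne hpm (Ne.symm hmp)
    have hmn : m < n := by nlinarith
    by_cases hdvd : p ∣ m
    · obtain ⟨k, hk⟩ := hdvd
      have hk0 : k ≠ 0 := by rintro rfl; rw [mul_zero] at hk; omega
      have hk1 : k ≠ 1 := by rintro rfl; rw [mul_one] at hk; exact hmp hk
      have hk2 : 2 ≤ k := by omega
      have hbn : p * (k + 1) < n := by nlinarith
      have hblt : p < p * (k + 1) := by nlinarith
      have key := zd_key n h (a := p) (b := p * (k + 1)) (w := m)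
        (by omega) (by omega) (by omega) hbn (by omega)
        (by omega) hmn (by rw [← hm]) ⟨k + 1, by rw [hm, hk]; ring⟩
      rw [hm, hk] at key
      have h2 : (p * p) * k ∣ (p * p) * (k + 1) := by
        have e1 : p * (p * k) * (p * (p * (k + 1))) = 0 ∨ True := Or.inr trivial
        calc (p * p) * k = p * (p * k) := by ring
          _ ∣ p * (p * (k + 1)) := key
          _ = (p * p) * (k + 1) := by ring
      have h3 : k ∣ k + 1 :=
        (mul_dvd_mul_iff_left (show (p * p : ℕ) ≠ 0 by positivity)).mp h2
      have h4 : k ∣ 1 := by simpa using Nat.dvd_sub h3 (dvd_refl k)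
      have := Nat.le_of_dvd one_pos h4
      omega
    · have hb2 : 2 * p < n := by nlinarith
      have key := zd_key n h (a := p) (b := 2 * p) (w := m)
        (by omega) (by omega) (by omega) hb2 (by omega)
        (by omega) hmn (by rw [← hm]) ⟨2, by rw [hm]; ring⟩
      rw [hm] at key
      have hmd : m ∣ 2 * p :=
        (mul_dvd_mul_iff_left (show (p : ℕ) ≠ 0 by omega)).mp key
      have hcop : Nat.Coprime m p :=
        Nat.coprime_comm.mp ((hp'.coprime_iff_not_dvd).mpr hdvd)
      have h5 : m ∣ 2 := (Nat.Coprime.dvd_of_dvd_mul_right hcop) hmd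
      have := Nat.le_of_dvd (by omega) h5
      omega
  · rintro ⟨p, hp, rfl⟩
    haveI : NeZero (p ^ 2) := ⟨by positivity⟩
    refine le_antisymm le_top ?_
    intro a b hab
    rw [SimpleGraph.top_adj] at hab
    refine ⟨hab, ?_⟩
    obtain ⟨x, hx⟩ := zd_dvd_val hp a
    obtain ⟨y, hy⟩ := zd_dvd_val hp b
    have hz : (((a : ZMod (p ^ 2)).val * (b : ZMod (p ^ 2)).val : ℕ) : ZMod (p ^ 2)) = 0 := by
      rw [ZMod.natCast_eq_zero_iff, hx, hy, sq]
      exact ⟨x * y, by ring⟩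
    rwa [Nat.cast_mul, ZMod.natCast_zmod_val, ZMod.natCast_zmod_val] at hz
end

section
/- Let n ≥ 4 be a composite integer. The complement graph of the zero divisor graph Γ(Z_n) is disconnected if and only if n is a product of two distinct primes, or n is a prime power with n ≠ 4. -/
open scoped BigOperators

/- ## Auxiliary lemmas -/

lemma zd_mul_eq_zero_iff {n : ℕ} [NeZero n] (x y : ZMod n) :
    x * y = 0 ↔ n ∣ x.val * y.val := by
  rw [← ZMod.val_eq_zero, ZMod.val_mul]
  exact Nat.dvd_iff_mod_eq_zero.symm

lemma nat_dvd_mul_iff_gcd {n a b : ℕ} (hn : 0 < n) :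
    n ∣ a * b ↔ n ∣ Nat.gcd a n * Nat.gcd b n := by
  constructor
  · intro h
    set d := Nat.gcd a n with hd
    have hd0 : 0 < d := Nat.gcd_pos_of_pos_right _ hn
    have hdn : d ∣ n := Nat.gcd_dvd_right a n
    have hda : d ∣ a := Nat.gcd_dvd_left a n
    have hco : Nat.Coprime (a / d) (n / d) := Nat.coprime_div_gcd_div_gcd (hd.symm ▸ hd0)
    have h1 : n / d ∣ (a / d) * b := by
      have : d * (n / d) ∣ d * ((a / d) * b) := by
        rw [Nat.mul_div_cancel' hdn, ← mul_assoc, Nat.mul_div_cancel' hda]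
        exact h
      exact (mul_dvd_mul_iff_left hd0.ne').mp this
    have h2 : n / d ∣ b := (hco.symm).dvd_of_dvd_mul_left h1
    have h3 : n / d ∣ Nat.gcd b n := Nat.dvd_gcd h2 (Nat.div_dvd_of_dvd hdn)
    calc n = d * (n / d) := (Nat.mul_div_cancel' hdn).symm
    _ ∣ d * Nat.gcd b n := mul_dvd_mul_left d h3
  · intro h
    exact h.trans (mul_dvd_mul (Nat.gcd_dvd_left a n) (Nat.gcd_dvd_left b n))

lemma zd_mul_eq_zero_iff_gcd {n : ℕ} [NeZero n] (x y : ZMod n) :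
    x * y = 0 ↔ n ∣ Nat.gcd x.val n * Nat.gcd y.val n := by
  rw [zd_mul_eq_zero_iff, nat_dvd_mul_iff_gcd (Nat.pos_of_ne_zero (NeZero.ne n))]

lemma vert_gcd_ne_one {n : ℕ} [NeZero n] (x : ZdVert n) : Nat.gcd (x : ZMod n).val n ≠ 1 := by
  intro h1
  obtain ⟨hx0, y, hy0, hxy⟩ := x.2
  rw [zd_mul_eq_zero_iff] at hxy
  have hco : Nat.Coprime n (x : ZMod n).val := (Nat.coprime_comm.mp h1)
  have : n ∣ (y : ZMod n).val := hco.dvd_of_dvd_mul_left hxy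
  have hy : (y : ZMod n).val = 0 := Nat.eq_zero_of_dvd_of_lt this (ZMod.val_lt _)
  exact hy0 ((ZMod.val_eq_zero y).mp hy)

/-- Build a vertex from naturals. -/
def mkVert (n m w : ℕ) (hm0 : 0 < m) (hmn : m < n) (hw0 : 0 < w) (hwn : w < n)
    (hdvd : n ∣ m * w) : ZdVert n :=
  ⟨(m : ZMod n), by
    have hn : NeZero n := ⟨by omega⟩
    constructor
    · intro h
      have := ZMod.val_natCast_of_lt hmn
      rw [h, ZMod.val_zero] at this
      omega
    · refine ⟨(w : ZMod n), ?_, ?_⟩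
      · intro h
        have := ZMod.val_natCast_of_lt hwn
        rw [h, ZMod.val_zero] at this
        omega
      · rw [← Nat.cast_mul, ZMod.natCast_eq_zero_iff]
        exact hdvd⟩

lemma mkVert_val (n m w : ℕ) (hm0 : 0 < m) (hmn : m < n) (hw0 : 0 < w) (hwn : w < n)
    (hdvd : n ∣ m * w) : ((mkVert n m w hm0 hmn hw0 hwn hdvd : ZdVert n) : ZMod n).val = m :=
  ZMod.val_natCast_of_lt hmn

lemma walk_invariant {V : Type*} {G : SimpleGraph V} {P : V → Prop}
    (h : ∀ a b, G.Adj a b → P a → P b) :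
    ∀ {a b : V}, G.Walk a b → P a → P b := by
  intro a b w
  induction w with
  | nil => exact id
  | cons hadj _ ih => exact fun pa => ih (h _ _ hadj pa)

lemma not_connected_of_invariant {V : Type*} {G : SimpleGraph V} (P : V → Prop)
    (h : ∀ a b, G.Adj a b → P a → P b) {u v : V} (hu : P u) (hv : ¬ P v) :
    ¬ G.Connected := by
  intro hc
  obtain ⟨w⟩ := hc.preconnected u v
  exact hv (walk_invariant h w hu)

/-- For composite `n ≥ 4`, the complement of the zero divisor graph `Γ(ZMod n)` is
disconnected iff `n` is a product of two distinct primes or a prime power with `n ≠ 4`. -/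
theorem zdGraph_compl_disconnected_iff (n : ℕ) (hn : 4 ≤ n) (hcomp : ¬ n.Prime) :
    ¬ ((zdGraph n)ᶜ.Connected) ↔
      ((∃ p q : ℕ, p.Prime ∧ q.Prime ∧ p ≠ q ∧ n = p * q) ∨
       ((∃ p k : ℕ, p.Prime ∧ 0 < k ∧ n = p ^ k) ∧ n ≠ 4)) := by
  haveI : NeZero n := ⟨by omega⟩
  constructor
  · -- contrapositive: ¬ RHS → Connected
    intro hdis
    by_contra hR
    push_neg at hR
    obtain ⟨hnotpq, hR2⟩ := hR
    apply hdis
    by_cases h4 : n = 4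
    · -- n = 4 : single vertex graph, connected
      subst h4
      rw [SimpleGraph.connected_iff]
      refine ⟨?_, ⟨mkVert 4 2 2 (by norm_num) (by norm_num) (by norm_num) (by norm_num) (by norm_num)⟩⟩
      · intro x y
        have hxy : x = y := by
          apply Subtype.ext
          have hx := x.2
          have hy := y.2
          have key : ∀ z : ZMod 4, (z ≠ 0 ∧ ∃ w : ZMod 4, w ≠ 0 ∧ z * w = 0) → z = 2 := by decide
          rw [key _ hx, key _ hy]
        rw [hxy]
    · -- n not a prime power, not pq : connected via hub vertices p, q
      have hnpp : ¬ ∃ p k : ℕ, p.Prime ∧ 0 < k ∧ n = p ^ k := by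
        intro hpp
        exact h4 (hR2 hpp)
      have hn0 : n ≠ 0 := by omega
      have hn1 : n ≠ 1 := by omega
      set p := n.minFac with hpdef
      have hp : p.Prime := Nat.minFac_prime hn1
      have hpd : p ∣ n := Nat.minFac_dvd n
      obtain ⟨q, hq, hqd, hqp⟩ : ∃ q : ℕ, q.Prime ∧ q ∣ n ∧ q ≠ p := by
        by_contra hq
        push_neg at hq
        have heq : n = p ^ n.primeFactorsList.length :=
          Nat.eq_prime_pow_of_unique_prime_dvd hn0 (fun hd hdn => hq _ hd hdn)
        have hlen : 0 < n.primeFactorsList.length := by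
          by_contra hl
          push_neg at hl
          interval_cases h : n.primeFactorsList.length
          · rw [heq, pow_zero] at hn1
            exact hn1 rfl
        exact hnpp ⟨p, _, hp, hlen, heq⟩
      have hco : Nat.Coprime p q := (Nat.coprime_primes hp hq).mpr (Ne.symm hqp)
      have hpqd : p * q ∣ n := hco.mul_dvd_of_dvd_of_dvd hpd hqd
      have hpqle : p * q ≤ n := Nat.le_of_dvd (by omega) hpqd
      have hpqn : p * q ≠ n := fun h => hnotpq p q hp hq (Ne.symm hqp) h.symm
      have hp2 := hp.two_le
      have hq2 := hq.two_le
      have hppq : p < p * q := by nlinarith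
      have hqpq : q < p * q := by nlinarith
      have hplt : p < n := by omega
      have hqlt : q < n := by omega
      have hpq0 : 0 < p * q := by positivity
      have hpqlt : p * q < n := by omega
      have hnp0 : 0 < n / p := Nat.div_pos (by omega) hp.pos
      have hnplt : n / p < n := Nat.div_lt_self (by omega) hp.one_lt
      have hnq0 : 0 < n / q := Nat.div_pos (by omega) hq.pos
      have hnqlt : n / q < n := Nat.div_lt_self (by omega) hq.one_lt
      have hdvdp : n ∣ p * (n / p) := dvd_of_eq (Nat.mul_div_cancel' hpd).symm
      have hdvdq : n ∣ q * (n / q) := dvd_of_eq (Nat.mul_div_cancel' hqd).symm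
      set hubP : ZdVert n := mkVert n p (n / p) hp.pos hplt hnp0 hnplt hdvdp with hhubP
      set hubQ : ZdVert n := mkVert n q (n / q) hq.pos hqlt hnq0 hnqlt hdvdq with hhubQ
      have hubPval : (hubP : ZMod n).val = p := mkVert_val _ _ _ _ _ _ _ _
      have hubQval : (hubQ : ZMod n).val = q := mkVert_val _ _ _ _ _ _ _ _
      have hPQadj : ((zdGraph n)ᶜ).Adj hubP hubQ := by
        rw [SimpleGraph.compl_adj]
        constructor
        · intro h
          have := congrArg (fun z : ZdVert n => (z : ZMod n).val) h
          simp only [hubPval, hubQval] at this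
          exact hqp this.symm
        · rintro ⟨-, hprod⟩
          rw [zd_mul_eq_zero_iff, hubPval, hubQval] at hprod
          have := Nat.le_of_dvd hpq0 hprod
          omega
      have key : ∀ x : ZdVert n, ((zdGraph n)ᶜ).Reachable x hubP := by
        intro x
        by_cases hxP : x = hubP
        · rw [hxP]
        set d := Nat.gcd (x : ZMod n).val n with hddef
        have hdn : d ∣ n := Nat.gcd_dvd_right _ _
        have hdx : d ∣ (x : ZMod n).val := Nat.gcd_dvd_left _ _
        by_cases hdp : n ∣ d * p
        · -- route through hubQ
          have hdq : ¬ n ∣ d * q := by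
            intro hq'
            have hnd : n ∣ d := by
              have h1 : n ∣ Nat.gcd (d * p) (d * q) := Nat.dvd_gcd hdp hq'
              rwa [Nat.gcd_mul_left, Nat.Coprime.gcd_eq_one hco, mul_one] at h1
            have hdneq : d = n := Nat.dvd_antisymm hdn hnd
            have hxv : n ∣ (x : ZMod n).val := by
              have h2 := hdx
              rw [hdneq] at h2
              exact h2
            have hx0 : (x : ZMod n).val = 0 := Nat.eq_zero_of_dvd_of_lt hxv (ZMod.val_lt _) 
            exact x.2.1 ((ZMod.val_eq_zero _).mp hx0)
          have hxQ : x ≠ hubQ := by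
            intro h
            have hval : (x : ZMod n).val = q := by rw [h, hubQval]
            have hdq2 : d = q := by rw [hddef, hval]; exact Nat.gcd_eq_left hqd
            rw [hdq2, mul_comm] at hdp
            have h3 := Nat.le_of_dvd hpq0 hdp
            omega
          have hadj : ((zdGraph n)ᶜ).Adj x hubQ := by
            rw [SimpleGraph.compl_adj]
            refine ⟨hxQ, ?_⟩
            rintro ⟨-, hprod⟩
            rw [zd_mul_eq_zero_iff_gcd, hubQval, Nat.gcd_eq_left hqd] at hprod
            exact hdq hprod
          exact hadj.reachable.trans hPQadj.symm.reachable
        · -- directly adjacent to hubP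
          have hadj : ((zdGraph n)ᶜ).Adj x hubP := by
            rw [SimpleGraph.compl_adj]
            refine ⟨hxP, ?_⟩
            rintro ⟨-, hprod⟩
            rw [zd_mul_eq_zero_iff_gcd, hubPval, Nat.gcd_eq_left hpd] at hprod
            exact hdp hprod
          exact hadj.reachable
      rw [SimpleGraph.connected_iff]
      exact ⟨fun x y => (key x).trans (key y).symm, ⟨hubP⟩⟩
  · -- RHS → disconnected
    rintro (⟨p, q, hp, hq, hpq, rfl⟩ | ⟨⟨p, k, hp, hk, rfl⟩, h4⟩)
    · -- n = p * q
      have hp2 := hp.two_le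
      have hq2 := hq.two_le
      have hplt : p < p * q := by nlinarith
      have hqlt : q < p * q := by nlinarith
      set n := p * q with hn'
      have hdvd1 : n ∣ p * q := dvd_rfl
      have hdvd2 : n ∣ q * p := by rw [mul_comm]
      refine not_connected_of_invariant (fun x : ZdVert n => p ∣ (x : ZMod n).val) ?_
        (u := mkVert n p q hp.pos hplt hq.pos hqlt hdvd1)
        (v := mkVert n q p hq.pos hqlt hp.pos hplt hdvd2) ?_ ?_
      · rintro a b hab hpa
        by_contra hpb
        rw [SimpleGraph.compl_adj] at hab
        obtain ⟨hne, hnadj⟩ := hab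
        apply hnadj
        refine ⟨hne, ?_⟩
        rw [zd_mul_eq_zero_iff]
        set g := Nat.gcd (b : ZMod n).val n with hg
        have hg1 : g ≠ 1 := vert_gcd_ne_one b
        have hgb : g ∣ (b : ZMod n).val := Nat.gcd_dvd_left _ _
        have hgn : g ∣ p * q := Nat.gcd_dvd_right _ _
        have hpg : ¬ p ∣ g := fun h => hpb (h.trans hgb)
        have hco : Nat.Coprime g p := ((hp.coprime_iff_not_dvd).mpr hpg).symm
        have hgq : g ∣ q := hco.dvd_of_dvd_mul_left hgn
        have hgeq : g = q := ((hq.eq_one_or_self_of_dvd g hgq).resolve_left hg1)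
        have hqb : q ∣ (b : ZMod n).val := hgeq ▸ hgb
        exact mul_dvd_mul hpa hqb
      · simp only [mkVert_val]
        exact dvd_rfl
      · simp only [mkVert_val]
        intro h
        exact hpq ((Nat.prime_dvd_prime_iff_eq hp hq).mp h)
    · -- n = p ^ k
      have hk2 : 2 ≤ k := by
        by_contra hlt
        have hk1 : k = 1 := by omega
        rw [hk1, pow_one] at hcomp
        exact hcomp hp
      set n := p ^ k with hn'
      have hppos : 0 < p ^ (k - 1) := pow_pos hp.pos _
      have hplt1 : p ^ (k - 1) < n := Nat.pow_lt_pow_right hp.one_lt (by omega)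
      have hplt2 : p < n := by
        calc p = p ^ 1 := (pow_one p).symm
        _ < p ^ k := Nat.pow_lt_pow_right hp.one_lt (by omega)
      have hdvd1 : n ∣ p ^ (k - 1) * p := by
        rw [← pow_succ]
        exact dvd_of_eq (by rw [hn']; congr 1; omega)
      have hdvd2 : n ∣ p * p ^ (k - 1) := by rwa [mul_comm]
      set x0 : ZdVert n := mkVert n (p ^ (k - 1)) p hppos hplt1 hp.pos hplt2 hdvd1 with hx0
      have hinv : ∀ a b : ZdVert n, ((zdGraph n)ᶜ).Adj a b → a = x0 → b = x0 := by
        rintro a b hab rfl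
        exfalso
        rw [SimpleGraph.compl_adj] at hab
        obtain ⟨hne, hnadj⟩ := hab
        apply hnadj
        refine ⟨hne, ?_⟩
        rw [zd_mul_eq_zero_iff]
        set g := Nat.gcd (b : ZMod n).val n with hg
        have hg1 : g ≠ 1 := vert_gcd_ne_one b
        have hgb : g ∣ (b : ZMod n).val := Nat.gcd_dvd_left _ _
        have hgn : g ∣ p ^ k := Nat.gcd_dvd_right _ _
        have hpg : p ∣ g := by
          obtain ⟨i, hik, hgi⟩ := (Nat.dvd_prime_pow hp).mp hgn
          have hi : i ≠ 0 := by rintro rfl; rw [pow_zero] at hgi; exact hg1 hgi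
          rw [hgi]
          exact dvd_pow_self p hi
        have hpb : p ∣ (b : ZMod n).val := hpg.trans hgb
        rw [mkVert_val]
        calc n ∣ p ^ (k - 1) * p := hdvd1
        _ ∣ p ^ (k - 1) * (b : ZMod n).val := mul_dvd_mul_left _ hpb
      rcases Nat.lt_or_ge k 3 with hk3 | hk3
      · -- k = 2, p ≥ 3
        have hk : k = 2 := by omega
        subst hk
        have hp3 : 3 ≤ p := by
          have h2 := hp.two_le
          rcases Nat.eq_or_lt_of_le h2 with h | h
          · exfalso
            apply h4
            rw [hn', ← h]
            norm_num
          · exact h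
        have h2p : 0 < 2 * p := by omega
        have h2plt : 2 * p < n := by
          rw [hn', pow_two]
          exact (Nat.mul_lt_mul_right hp.pos).mpr (by omega)
        have hdvd3 : n ∣ 2 * p * p := ⟨2, by rw [hn', pow_two]; ring⟩
        refine not_connected_of_invariant (fun x : ZdVert n => x = x0)
          (fun a b hab ha => hinv a b hab ha) (u := x0) rfl
          (v := mkVert n (2 * p) p h2p h2plt hp.pos hplt2 hdvd3) ?_
        intro h
        have hv := congrArg (fun z : ZdVert n => (z : ZMod n).val) h
        simp only [mkVert_val, hx0] at hv
        have hppos' := hp.pos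
        norm_num at hv
        omega
      · -- k ≥ 3
        have hpp1 : p < p ^ (k - 1) := by
          calc p = p ^ 1 := (pow_one p).symm
          _ < p ^ (k - 1) := Nat.pow_lt_pow_right hp.one_lt (by omega)
        refine not_connected_of_invariant (fun x : ZdVert n => x = x0)
          (fun a b hab ha => hinv a b hab ha) (u := x0) rfl
          (v := mkVert n p (p ^ (k - 1)) hp.pos hplt2 hppos hplt1 hdvd2) ?_
        intro h
        have hv := congrArg (fun z : ZdVert n => (z : ZMod n).val) h
        simp only [mkVert_val, hx0] at hv
        omega
end
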